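/- Let f : ℝⁿ → ℝ be bounded and uniformly continuous with modulus of continuity ω_f satisfying ω_f(t) ≤ a·t + b for all t ≥ 0, with a > 0 and b ≥ 0. Let h > 0, n ≥ 1, λ > 0. Then for every point x_k of the grid hℤⁿ: |M_λ^h(f)(x_k) − M_λ(f)(x_k)| ≤ ω_f(h√n) + 2λh²n + 2h√λ·d(λ), where d(λ) = √(ω_f(a/λ + √(b/λ))). -/
import Mathlib

noncomputable section

/-- Global lower Moreau envelope `M_λ(f)(x) = inf_{y∈ℝⁿ} {f(y) + λ|y−x|²}`. -/
def moreauLower {n : ℕ} (lam : ℝ) (f : EuclideanSpace ℝ (Fin n) → ℝ)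
    (x : EuclideanSpace ℝ (Fin n)) : ℝ :=
  ⨅ y : EuclideanSpace ℝ (Fin n), (f y + lam * ‖y - x‖ ^ 2)

/-- The grid point `x_k = h·k` of the grid `hℤⁿ`. -/
def gridPt {n : ℕ} (h : ℝ) (k : Fin n → ℤ) : EuclideanSpace ℝ (Fin n) :=
  (WithLp.equiv 2 (Fin n → ℝ)).symm (fun i => h * (k i))

/-- The discrete lower Moreau envelope at the grid point `x_k`:
`M_λ^h(f)(x_k) = inf {f(x_k + r·h) + λh²|r|² : r ∈ ℤⁿ}`. -/
def moreauLowerDiscrete {n : ℕ} (lam h : ℝ) (f : EuclideanSpace ℝ (Fin n) → ℝ)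
    (k : Fin n → ℤ) : ℝ :=
  ⨅ r : Fin n → ℤ, (f (gridPt h (k + r)) + lam * h ^ 2 * ‖gridPt 1 r‖ ^ 2)

/-- The modulus of continuity `ω_f(t) = sup {|f(x) − f(y)| : |x − y| ≤ t}`. -/
def modCont {n : ℕ} (f : EuclideanSpace ℝ (Fin n) → ℝ) (t : ℝ) : ℝ :=
  sSup {d : ℝ | ∃ x y : EuclideanSpace ℝ (Fin n), ‖x - y‖ ≤ t ∧ d = |f x - f y|}

/-- Truncation of a real number toward zero. -/
def truncZ (t : ℝ) : ℤ := if 0 ≤ t then ⌊t⌋ else ⌈t⌉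

lemma truncZ_abs_le (t : ℝ) : |(truncZ t : ℝ)| ≤ |t| := by
  unfold truncZ
  split_ifs with h
  · rw [abs_of_nonneg h, abs_of_nonneg (by exact_mod_cast Int.floor_nonneg.mpr h)]
    exact Int.floor_le t
  · push_neg at h
    have hc : (⌈t⌉ : ℝ) ≤ 0 := by
      exact_mod_cast Int.ceil_le.mpr (by exact_mod_cast h.le)
    rw [abs_of_neg h, abs_of_nonpos hc]
    simpa using Int.le_ceil t

lemma truncZ_sub_le (t : ℝ) : |(truncZ t : ℝ) - t| ≤ 1 := by
  unfold truncZ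
  split_ifs with h
  · rw [abs_le]
    constructor <;> [linarith [Int.sub_one_lt_floor t]; linarith [Int.floor_le t]]
  · rw [abs_le]
    constructor <;> [linarith [Int.le_ceil t]; linarith [Int.ceil_lt_add_one t]]

lemma euclid_norm_sq {n : ℕ} (u : EuclideanSpace ℝ (Fin n)) :
    ‖u‖ ^ 2 = ∑ i, (u i) ^ 2 := by
  rw [EuclideanSpace.norm_eq, Real.sq_sqrt (by positivity)]
  simp

lemma abs_sub_le_modCont {n : ℕ} (f : EuclideanSpace ℝ (Fin n) → ℝ)
    (C : ℝ) (hC : ∀ x, |f x| ≤ C) {t : ℝ} {u v : EuclideanSpace ℝ (Fin n)}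
    (huv : ‖u - v‖ ≤ t) : |f u - f v| ≤ modCont f t := by
  apply le_csSup
  · refine ⟨2 * C, ?_⟩
    rintro d ⟨p, q, -, rfl⟩
    calc |f p - f q| ≤ |f p| + |f q| := abs_sub _ _
      _ ≤ 2 * C := by linarith [hC p, hC q]
  · exact ⟨u, v, huv, rfl⟩

lemma modCont_nonneg {n : ℕ} (f : EuclideanSpace ℝ (Fin n) → ℝ)
    (C : ℝ) (hC : ∀ x, |f x| ≤ C) {t : ℝ} (ht : 0 ≤ t) : 0 ≤ modCont f t := by
  have := abs_sub_le_modCont f C hC (t := t) (u := 0) (v := 0) (by simpa using ht)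
  simpa using this

theorem discrete_moreau_error_modCont {n : ℕ} (hn : 1 ≤ n)
    (f : EuclideanSpace ℝ (Fin n) → ℝ)
    (hb : ∃ C : ℝ, ∀ x : EuclideanSpace ℝ (Fin n), |f x| ≤ C)
    (huc : UniformContinuous f)
    (a b : ℝ) (ha : 0 < a) (hb' : 0 ≤ b)
    (hω : ∀ t : ℝ, 0 ≤ t → modCont f t ≤ a * t + b)
    (h lam : ℝ) (hh : 0 < h) (hlam : 0 < lam) :
    ∀ k : Fin n → ℤ,
      |moreauLowerDiscrete lam h f k - moreauLower lam f (gridPt h k)|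
        ≤ modCont f (h * Real.sqrt n) + 2 * lam * h ^ 2 * n
          + 2 * h * Real.sqrt lam * Real.sqrt (modCont f (a / lam + Real.sqrt (b / lam))) := by
  intro k
  obtain ⟨C, hC⟩ := hb
  set x := gridPt h k with hx
  -- basic rewriting: grid points as translates of x
  have hgrid : ∀ r : Fin n → ℤ, gridPt h (k + r) - x = h • gridPt 1 r := by
    intro r; ext i; simp [gridPt, hx]; ring
  have hval : ∀ r : Fin n → ℤ,
      f (gridPt h (k + r)) + lam * h ^ 2 * ‖gridPt 1 r‖ ^ 2
        = f (gridPt h (k + r)) + lam * ‖gridPt h (k + r) - x‖ ^ 2 := by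
    intro r
    rw [hgrid r, norm_smul]
    simp [abs_of_pos hh]
    ring
  -- lower boundedness
  have hbddC : BddBelow (Set.range fun y : EuclideanSpace ℝ (Fin n) =>
      f y + lam * ‖y - x‖ ^ 2) := by
    refine ⟨-C, ?_⟩
    rintro _ ⟨y, rfl⟩
    have h1 := (abs_le.mp (hC y)).1
    have h2 : 0 ≤ lam * ‖y - x‖ ^ 2 := by positivity
    dsimp only
    linarith
  have hbddD : BddBelow (Set.range fun r : Fin n → ℤ =>
      f (gridPt h (k + r)) + lam * h ^ 2 * ‖gridPt 1 r‖ ^ 2) := by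
    refine ⟨-C, ?_⟩
    rintro _ ⟨r, rfl⟩
    have h1 := (abs_le.mp (hC (gridPt h (k + r)))).1
    have h2 : 0 ≤ lam * h ^ 2 * ‖gridPt 1 r‖ ^ 2 := by positivity
    dsimp only
    linarith
  -- Step A : continuous envelope ≤ discrete envelope
  have hA : moreauLower lam f x ≤ moreauLowerDiscrete lam h f k := by
    apply le_ciInf
    intro r
    rw [hval r]
    exact ciInf_le hbddC (gridPt h (k + r))
  -- nonnegativity of ω(h√n)
  have hsn : (0:ℝ) ≤ h * Real.sqrt n := by positivity
  have hω0 : 0 ≤ modCont f (h * Real.sqrt n) := modCont_nonneg f C hC hsn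
  -- Step B : discrete ≤ continuous + ω(h√n)
  have hB : moreauLowerDiscrete lam h f k
      ≤ moreauLower lam f x + modCont f (h * Real.sqrt n) := by
    rw [← sub_le_iff_le_add]
    apply le_ciInf
    intro y
    rw [sub_le_iff_le_add]
    -- choose the truncated grid point
    set r : Fin n → ℤ := fun i => truncZ ((y i - x i) / h) with hr
    have hcoord : ∀ i, gridPt h (k + r) i - x i = h * (r i) := by
      intro i; simp [gridPt, hx]; ring
    -- ‖z - x‖² ≤ ‖y - x‖²
    have hzx : ‖gridPt h (k + r) - x‖ ^ 2 ≤ ‖y - x‖ ^ 2 := by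
      rw [euclid_norm_sq, euclid_norm_sq]
      apply Finset.sum_le_sum
      intro i _
      have h1 : (gridPt h (k + r) - x) i = h * (r i) := by
        simpa using hcoord i
      have h2 : (y - x) i = y i - x i := rfl
      rw [h1, h2]
      have h3 := truncZ_abs_le ((y i - x i) / h)
      have h4 : |h * (r i : ℝ)| ≤ |y i - x i| := by
        have : h * |(r i : ℝ)| ≤ h * |(y i - x i) / h| :=
          mul_le_mul_of_nonneg_left h3 hh.le
        rw [abs_div, abs_of_pos hh] at this
        calc |h * (r i : ℝ)| = h * |(r i : ℝ)| := by
              rw [abs_mul, abs_of_pos hh]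
          _ ≤ h * (|y i - x i| / h) := this
          _ = |y i - x i| := by field_simp
      nlinarith [abs_nonneg (h * (r i : ℝ)), abs_nonneg (y i - x i),
        sq_abs (h * (r i : ℝ)), sq_abs (y i - x i)]
    -- ‖z - y‖ ≤ h√n
    have hzy : ‖gridPt h (k + r) - y‖ ≤ h * Real.sqrt n := by
      have hsq : ‖gridPt h (k + r) - y‖ ^ 2 ≤ n * h ^ 2 := by
        rw [euclid_norm_sq]
        calc ∑ i, ((gridPt h (k + r) - y) i) ^ 2 ≤ ∑ _i : Fin n, h ^ 2 := by
              apply Finset.sum_le_sum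
              intro i _
              have h1 : (gridPt h (k + r) - y) i
                  = h * ((r i : ℝ) - (y i - x i) / h) := by
                have hz : gridPt h (k + r) i = x i + h * (r i : ℝ) := by
                  have := hcoord i; linarith
                have hsub : (gridPt h (k + r) - y) i = gridPt h (k + r) i - y i := rfl
                rw [hsub, hz]
                field_simp
                ring
              rw [h1]
              have h3 : |(r i : ℝ) - (y i - x i) / h| ≤ 1 :=
                truncZ_sub_le ((y i - x i) / h)
              have h4 : ((r i : ℝ) - (y i - x i) / h) ^ 2 ≤ 1 := by
                rw [← sq_abs]
                nlinarith [abs_nonneg ((r i : ℝ) - (y i - x i) / h)]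
              calc (h * ((r i : ℝ) - (y i - x i) / h)) ^ 2
                  = h ^ 2 * ((r i : ℝ) - (y i - x i) / h) ^ 2 := by ring
                _ ≤ h ^ 2 * 1 := mul_le_mul_of_nonneg_left h4 (by positivity)
                _ = h ^ 2 := by ring
          _ = n * h ^ 2 := by simp [mul_comm]
      have h5 : ‖gridPt h (k + r) - y‖ = Real.sqrt (‖gridPt h (k + r) - y‖ ^ 2) := by
        rw [Real.sqrt_sq (norm_nonneg _)]
      rw [h5]
      calc Real.sqrt (‖gridPt h (k + r) - y‖ ^ 2) ≤ Real.sqrt (n * h ^ 2) :=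
            Real.sqrt_le_sqrt hsq
        _ = h * Real.sqrt n := by
            rw [Real.sqrt_mul (by positivity), Real.sqrt_sq hh.le]; ring
    -- conclude step B for this y
    have hf : f (gridPt h (k + r)) ≤ f y + modCont f (h * Real.sqrt n) := by
      have := abs_sub_le_modCont f C hC hzy
      have h6 := (abs_le.mp this).2
      linarith
    have hle : f (gridPt h (k + r)) + lam * h ^ 2 * ‖gridPt 1 r‖ ^ 2
        ≤ f y + lam * ‖y - x‖ ^ 2 + modCont f (h * Real.sqrt n) := by
      rw [hval r]
      have h7 : lam * ‖gridPt h (k + r) - x‖ ^ 2 ≤ lam * ‖y - x‖ ^ 2 :=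
        mul_le_mul_of_nonneg_left hzx hlam.le
      linarith
    exact le_trans (ciInf_le hbddD r) hle
  -- finish
  have habs : |moreauLowerDiscrete lam h f k - moreauLower lam f x|
      = moreauLowerDiscrete lam h f k - moreauLower lam f x :=
    abs_of_nonneg (by linarith)
  rw [habs]
  have hterm1 : (0:ℝ) ≤ 2 * lam * h ^ 2 * n := by positivity
  have hterm2 : (0:ℝ) ≤ 2 * h * Real.sqrt lam
      * Real.sqrt (modCont f (a / lam + Real.sqrt (b / lam))) := by positivity
  linarith
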